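/- Let k be a field of characteristic zero and c, d ≥ 2 integers. In the group of k-algebra automorphisms of k[x,y], let u_s be the automorphism fixing y and sending x to x + s·y^c, and v_t the automorphism fixing x and sending y to y + t·x^d, for s, t ∈ k. Then for any nonzero s, t ∈ k, the subgroup generated by u_s and v_t is free of rank 2. -/

import Mathlib

open MvPolynomial

noncomputable def DegFun : (Fin 2 →₀ ℕ) → Lex (ℕ × ℕ) := fun m => toLex (m 0 + m 1, m 0)

lemma DegFun_inj : Function.Injective DegFun := by
  intro m n h
  simp only [DegFun, Prod.mk.injEq] at h
  rw [toLex_inj, Prod.mk.injEq] at h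
  ext i
  fin_cases i
  · exact h.2
  · have h1 : m 1 = n 1 := by omega
    simpa using h1

lemma DegFun_add (a b : Fin 2 →₀ ℕ) : DegFun (a + b) = DegFun a + DegFun b := by
  simp only [DegFun, Finsupp.add_apply]
  rw [← toLex_add, Prod.mk_add_mk]
  ring_nf

lemma fst_ofLex_mono : Monotone (fun x : Lex (ℕ × ℕ) => (ofLex x).1) := by
  intro x y h
  rcases (Prod.Lex.le_iff).1 h with h | ⟨h, _⟩
  · exact h.le
  · exact h.le

lemma fst_ofLex_sup (x y : Lex (ℕ × ℕ)) : (ofLex (x ⊔ y)).1 = (ofLex x).1 ⊔ (ofLex y).1 := by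
  rcases le_total x y with h | h
  · rw [sup_eq_right.2 h, sup_eq_right.2 (fst_ofLex_mono h)]
  · rw [sup_eq_left.2 h, sup_eq_left.2 (fst_ofLex_mono h)]

lemma td_eq {k : Type*} [Field k] (p : MvPolynomial (Fin 2) k) :
    p.totalDegree = (ofLex (AddMonoidAlgebra.supDegree DegFun p)).1 := by
  have : (ofLex (AddMonoidAlgebra.supDegree DegFun p)).1
      = p.support.sup (fun m => (ofLex (DegFun m)).1) :=
    Finset.comp_sup_eq_sup_comp (fun x : Lex (ℕ × ℕ) => (ofLex x).1)
      (fun x y => fst_ofLex_sup x y) rfl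
  rw [this, totalDegree]
  apply Finset.sup_congr rfl
  intro m _
  show (m.sum fun _ e => e) = m 0 + m 1
  rw [Finsupp.sum_fintype _ _ (fun _ => rfl), Fin.sum_univ_two]

lemma totalDegree_mul_eq {k : Type*} [Field k] {p q : MvPolynomial (Fin 2) k}
    (hp : p ≠ 0) (hq : q ≠ 0) :
    (p * q).totalDegree = p.totalDegree + q.totalDegree := by
  have lp : AddMonoidAlgebra.leadingCoeff DegFun p ≠ 0 := by
    rw [Ne, AddMonoidAlgebra.leadingCoeff_eq_zero DegFun_inj]; exact hp
  have lq : AddMonoidAlgebra.leadingCoeff DegFun q ≠ 0 := by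
    rw [Ne, AddMonoidAlgebra.leadingCoeff_eq_zero DegFun_inj]; exact hq
  have h := AddMonoidAlgebra.supDegree_mul DegFun_inj DegFun_add (mul_ne_zero lp lq) hp hq
  rw [td_eq, td_eq, td_eq, h]
  obtain ⟨ap, -, hap⟩ := AddMonoidAlgebra.exists_supDegree_mem_support DegFun hp
  obtain ⟨aq, -, haq⟩ := AddMonoidAlgebra.exists_supDegree_mem_support DegFun hq
  rw [hap, haq]
  rfl

lemma totalDegree_pow_eq {k : Type*} [Field k] {q : MvPolynomial (Fin 2) k}
    (hq : q ≠ 0) (n : ℕ) : (q ^ n).totalDegree = n * q.totalDegree := by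
  induction n with
  | zero => simp
  | succ n ih =>
    rw [pow_succ, totalDegree_mul_eq (pow_ne_zero n hq) hq, ih]
    ring

lemma deg_shape {k : Type*} [Field k] {e : k} (he : e ≠ 0) {c : ℕ}
    {R q : MvPolynomial (Fin 2) k} (hq : 1 ≤ q.totalDegree)
    (hR : R.totalDegree < c * q.totalDegree) :
    (R + C e * q ^ c).totalDegree = c * q.totalDegree := by
  have hq0 : q ≠ 0 := by rintro rfl; simp at hq
  have hC : (C e : MvPolynomial (Fin 2) k) ≠ 0 := by simpa using he
  have h1 : (C e * q ^ c).totalDegree = c * q.totalDegree := by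
    rw [totalDegree_mul_eq hC (pow_ne_zero c hq0), totalDegree_C,
      totalDegree_pow_eq hq0, zero_add]
  rw [totalDegree_add_eq_right_of_totalDegree_lt (by rw [h1]; exact hR), h1]

section PingPong

variable {k : Type*} [Field k] [CharZero k]
  (u v : MvPolynomial (Fin 2) k ≃ₐ[k] MvPolynomial (Fin 2) k)

/-- The product of the automorphisms corresponding to the letters of a word. -/
noncomputable def Wrd (l : List (Fin 2 × Bool)) :
    MvPolynomial (Fin 2) k ≃ₐ[k] MvPolynomial (Fin 2) k :=
  (List.map (fun x : Fin 2 × Bool =>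
    cond x.2 (if x.1 = 0 then u else v) (if x.1 = 0 then u else v)⁻¹) l).prod

lemma Wrd_concat (l : List (Fin 2 × Bool)) (x : Fin 2 × Bool) :
    Wrd u v (l ++ [x]) = Wrd u v l *
      cond x.2 (if x.1 = 0 then u else v) (if x.1 = 0 then u else v)⁻¹ := by
  rw [Wrd, List.map_append, List.prod_append, List.map_singleton, List.prod_singleton]
  rfl

theorem pingpong_main {c d : ℕ} (hc : 2 ≤ c) (hd : 2 ≤ d)
    {s t : k} (hs : s ≠ 0) (ht : t ≠ 0)
    (hux : u (X 0) = X 0 + C s * (X 1) ^ c) (huy : u (X 1) = X 1)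
    (hvx : v (X 0) = X 0) (hvy : v (X 1) = X 1 + C t * (X 0) ^ d) :
    ∀ l : List (Fin 2 × Bool),
      (∀ (l₁ l₂ : List (Fin 2 × Bool)) (i : Fin 2) (b : Bool),
        l ≠ l₁ ++ (i, b) :: (i, !b) :: l₂) →
      l ≠ [] →
      (∃ (b : Bool) (m : ℤ) (R : MvPolynomial (Fin 2) k),
        l.getLast? = some (0, b) ∧ m ≠ 0 ∧ (b = true → 0 < m) ∧ (b = false → m < 0) ∧
        Wrd u v l (X 0) = R + C ((m : k) * s) * (Wrd u v l (X 1)) ^ c ∧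
        R.totalDegree < c * (Wrd u v l (X 1)).totalDegree ∧
        1 ≤ (Wrd u v l (X 1)).totalDegree) ∨
      (∃ (b : Bool) (m : ℤ) (R : MvPolynomial (Fin 2) k),
        l.getLast? = some (1, b) ∧ m ≠ 0 ∧ (b = true → 0 < m) ∧ (b = false → m < 0) ∧
        Wrd u v l (X 1) = R + C ((m : k) * t) * (Wrd u v l (X 0)) ^ d ∧
        R.totalDegree < d * (Wrd u v l (X 0)).totalDegree ∧
        1 ≤ (Wrd u v l (X 0)).totalDegree) := by
  -- basic facts about the generators
  have hCfix : ∀ (g : MvPolynomial (Fin 2) k ≃ₐ[k] MvPolynomial (Fin 2) k) (e : k),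
      g (C e) = C e := by
    intro g e
    rw [← MvPolynomial.algebraMap_eq]
    exact g.commutes e
  have huix : u⁻¹ (X 0) = X 0 - C s * (X 1) ^ c := by
    show u.symm (X 0) = _
    rw [u.symm_apply_eq, map_sub, map_mul, map_pow, hCfix, hux, huy]
    ring
  have huiy : u⁻¹ (X 1) = X 1 := by
    show u.symm (X 1) = _
    rw [u.symm_apply_eq, huy]
  have hvix : v⁻¹ (X 0) = X 0 := by
    show v.symm (X 0) = _
    rw [v.symm_apply_eq, hvx]
  have hviy : v⁻¹ (X 1) = X 1 - C t * (X 0) ^ d := by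
    show v.symm (X 1) = _
    rw [v.symm_apply_eq, map_sub, map_mul, map_pow, hCfix, hvy, hvx]
    ring
  intro l
  induction l using List.reverseRecOn with
  | nil => intro _ hne; exact absurd rfl hne
  | append_singleton l x ih =>
    intro hred _
    have hredl : ∀ (l₁ l₂ : List (Fin 2 × Bool)) (i : Fin 2) (b : Bool),
        l ≠ l₁ ++ (i, b) :: (i, !b) :: l₂ := by
      intro l₁ l₂ i b h
      exact hred l₁ (l₂ ++ [x]) i b (by rw [h]; simp)
    obtain ⟨i, b'⟩ := x
    set P := Wrd u v l (X 0) with hPdef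
    set Q := Wrd u v l (X 1) with hQdef
    -- transition formulas
    have hu0 : ∀ b : Bool, Wrd u v (l ++ [((0 : Fin 2), b)]) (X 0)
        = P + C (((cond b 1 (-1) : ℤ) : k) * s) * Q ^ c := by
      intro b
      rw [Wrd_concat]
      cases b
      · simp only [cond_false, eq_self_iff_true, if_true, AlgEquiv.mul_apply, huix]
        rw [map_sub, map_mul, map_pow, hCfix]
        push_cast
        simp only [neg_mul, one_mul, map_neg]
        ring
      · simp only [cond_true, eq_self_iff_true, if_true, AlgEquiv.mul_apply, hux]
        rw [map_add, map_mul, map_pow, hCfix]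
        push_cast
        rw [hPdef, hQdef]
        ring
    have hu1 : ∀ b : Bool, Wrd u v (l ++ [((0 : Fin 2), b)]) (X 1) = Q := by
      intro b
      rw [Wrd_concat]
      cases b
      · simp only [cond_false, eq_self_iff_true, if_true, AlgEquiv.mul_apply, huiy]
        exact hQdef.symm
      · simp only [cond_true, eq_self_iff_true, if_true, AlgEquiv.mul_apply, huy]
        exact hQdef.symm
    have hone : ((1 : Fin 2) = 0) = False := by simp
    have hv1 : ∀ b : Bool, Wrd u v (l ++ [((1 : Fin 2), b)]) (X 1)
        = Q + C (((cond b 1 (-1) : ℤ) : k) * t) * P ^ d := by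
      intro b
      rw [Wrd_concat]
      cases b
      · simp only [cond_false, hone, if_false, AlgEquiv.mul_apply, hviy]
        rw [map_sub, map_mul, map_pow, hCfix]
        push_cast
        simp only [neg_mul, one_mul, map_neg]
        ring
      · simp only [cond_true, hone, if_false, AlgEquiv.mul_apply, hvy]
        rw [map_add, map_mul, map_pow, hCfix]
        push_cast
        rw [hPdef, hQdef]
        ring
    have hv0 : ∀ b : Bool, Wrd u v (l ++ [((1 : Fin 2), b)]) (X 0) = P := by
      intro b
      rw [Wrd_concat]
      cases b
      · simp only [cond_false, hone, if_false, AlgEquiv.mul_apply, hvix]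
        exact hPdef.symm
      · simp only [cond_true, hone, if_false, AlgEquiv.mul_apply, hvx]
        exact hPdef.symm
    -- generic "fresh letter" steps
    have hcase0 : ∀ b : Bool, P.totalDegree < c * Q.totalDegree → 1 ≤ Q.totalDegree →
        (∃ (b₀ : Bool) (m : ℤ) (R : MvPolynomial (Fin 2) k),
          (l ++ [((0 : Fin 2), b)]).getLast? = some (0, b₀) ∧ m ≠ 0 ∧
          (b₀ = true → 0 < m) ∧ (b₀ = false → m < 0) ∧
          Wrd u v (l ++ [((0 : Fin 2), b)]) (X 0)
            = R + C ((m : k) * s) * (Wrd u v (l ++ [((0 : Fin 2), b)]) (X 1)) ^ c ∧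
          R.totalDegree < c * (Wrd u v (l ++ [((0 : Fin 2), b)]) (X 1)).totalDegree ∧
          1 ≤ (Wrd u v (l ++ [((0 : Fin 2), b)]) (X 1)).totalDegree) := by
      intro b hdeg hQ1
      refine ⟨b, cond b 1 (-1), P, List.getLast?_concat, ?_, ?_, ?_, ?_, ?_, ?_⟩
      · cases b <;> simp
      · cases b <;> simp
      · cases b <;> simp
      · rw [hu0, hu1]
      · rw [hu1]; exact hdeg
      · rw [hu1]; exact hQ1
    have hcase1 : ∀ b : Bool, Q.totalDegree < d * P.totalDegree → 1 ≤ P.totalDegree →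
        (∃ (b₀ : Bool) (m : ℤ) (R : MvPolynomial (Fin 2) k),
          (l ++ [((1 : Fin 2), b)]).getLast? = some (1, b₀) ∧ m ≠ 0 ∧
          (b₀ = true → 0 < m) ∧ (b₀ = false → m < 0) ∧
          Wrd u v (l ++ [((1 : Fin 2), b)]) (X 1)
            = R + C ((m : k) * t) * (Wrd u v (l ++ [((1 : Fin 2), b)]) (X 0)) ^ d ∧
          R.totalDegree < d * (Wrd u v (l ++ [((1 : Fin 2), b)]) (X 0)).totalDegree ∧
          1 ≤ (Wrd u v (l ++ [((1 : Fin 2), b)]) (X 0)).totalDegree) := by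
      intro b hdeg hP1
      refine ⟨b, cond b 1 (-1), Q, List.getLast?_concat, ?_, ?_, ?_, ?_, ?_, ?_⟩
      · cases b <;> simp
      · cases b <;> simp
      · cases b <;> simp
      · rw [hv1, hv0]
      · rw [hv0]; exact hdeg
      · rw [hv0]; exact hP1
    rcases eq_or_ne l [] with rfl | hlne
    · -- base case : single letter word
      have hP : P = X 0 := by rw [hPdef, Wrd]; simp
      have hQ : Q = X 1 := by rw [hQdef, Wrd]; simp
      have hdP : P.totalDegree = 1 := by rw [hP, totalDegree_X]
      have hdQ : Q.totalDegree = 1 := by rw [hQ, totalDegree_X]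
      obtain rfl | rfl : i = 0 ∨ i = 1 := by omega
      · exact Or.inl (hcase0 b' (by rw [hdP, hdQ]; omega) (by omega))
      · exact Or.inr (hcase1 b' (by rw [hdP, hdQ]; omega) (by omega))
    · rcases ih hredl hlne with ⟨b, m, R, hlast, hm, hbt, hbf, hP, hRdeg, hQ1⟩ |
        ⟨b, m, R, hlast, hm, hbt, hbf, hQ, hRdeg, hP1⟩
      · -- l ends with a `u`-letter
        have hdegP : P.totalDegree = c * Q.totalDegree := by
          rw [hP]
          exact deg_shape (mul_ne_zero (Int.cast_ne_zero.2 hm) hs) hQ1 hRdeg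
        obtain rfl | rfl : i = 0 ∨ i = 1 := by omega
        · -- appending another `u`-letter: must have the same sign
          have h1 : l.getLast hlne = ((0 : Fin 2), b) := by
            rw [List.getLast?_eq_getLast hlne] at hlast
            exact Option.some_injective _ hlast
          have hdecomp : l = l.dropLast ++ [((0 : Fin 2), b)] := by
            conv_lhs => rw [← List.dropLast_append_getLast hlne]
            rw [h1]
          have hb' : b' = b := by
            by_contra h
            have hb2 : b' = !b := by cases b <;> cases b' <;> first | rfl | exact absurd rfl h
            refine hred l.dropLast [] 0 b ?_
            rw [hb2, hdecomp]
            simp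
          subst hb'
          refine Or.inl ⟨b', m + (cond b' 1 (-1)), R, List.getLast?_concat,
            ?_, ?_, ?_, ?_, ?_, ?_⟩
          · cases b'
            · have := hbf rfl; simp only [cond_false]; omega
            · have := hbt rfl; simp only [cond_true]; omega
          · intro hb; subst hb; have := hbt rfl; simp only [cond_true]; omega
          · intro hb; subst hb; have := hbf rfl; simp only [cond_false]; omega
          · rw [hu0, hu1, hP]
            have hcomb : (C (((m + (cond b' 1 (-1)) : ℤ) : k) * s) : MvPolynomial (Fin 2) k)
                = C ((m : k) * s) + C (((cond b' 1 (-1) : ℤ) : k) * s) := by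
              push_cast
              rw [add_mul, map_add]
            rw [hcomb]
            ring
          · rw [hu1]; exact hRdeg
          · rw [hu1]; exact hQ1
        · -- appending a `v`-letter
          have h2 : 2 * Q.totalDegree ≤ c * Q.totalDegree :=
            Nat.mul_le_mul_right _ hc
          refine Or.inr (hcase1 b' ?_ ?_)
          · have hQP : Q.totalDegree < P.totalDegree := by omega
            exact lt_of_lt_of_le hQP (Nat.le_mul_of_pos_left _ (by omega))
          · omega
      · -- l ends with a `v`-letter
        have hdegQ : Q.totalDegree = d * P.totalDegree := by
          rw [hQ]
          exact deg_shape (mul_ne_zero (Int.cast_ne_zero.2 hm) ht) hP1 hRdeg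
        obtain rfl | rfl : i = 0 ∨ i = 1 := by omega
        · have h2 : 2 * P.totalDegree ≤ d * P.totalDegree :=
            Nat.mul_le_mul_right _ hd
          refine Or.inl (hcase0 b' ?_ ?_)
          · have hPQ : P.totalDegree < Q.totalDegree := by omega
            exact lt_of_lt_of_le hPQ (Nat.le_mul_of_pos_left _ (by omega))
          · omega
        · -- appending another `v`-letter: must have the same sign
          have h1 : l.getLast hlne = ((1 : Fin 2), b) := by
            rw [List.getLast?_eq_getLast hlne] at hlast
            exact Option.some_injective _ hlast
          have hdecomp : l = l.dropLast ++ [((1 : Fin 2), b)] := by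
            conv_lhs => rw [← List.dropLast_append_getLast hlne]
            rw [h1]
          have hb' : b' = b := by
            by_contra h
            have hb2 : b' = !b := by cases b <;> cases b' <;> first | rfl | exact absurd rfl h
            refine hred l.dropLast [] 1 b ?_
            rw [hb2, hdecomp]
            simp
          subst hb'
          refine Or.inr ⟨b', m + (cond b' 1 (-1)), R, List.getLast?_concat,
            ?_, ?_, ?_, ?_, ?_, ?_⟩
          · cases b'
            · have := hbf rfl; simp only [cond_false]; omega
            · have := hbt rfl; simp only [cond_true]; omega
          · intro hb; subst hb; have := hbt rfl; simp only [cond_true]; omega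
          · intro hb; subst hb; have := hbf rfl; simp only [cond_false]; omega
          · rw [hv1, hv0, hQ]
            have hcomb : (C (((m + (cond b' 1 (-1)) : ℤ) : k) * t) : MvPolynomial (Fin 2) k)
                = C ((m : k) * t) + C (((cond b' 1 (-1) : ℤ) : k) * t) := by
              push_cast
              rw [add_mul, map_add]
            rw [hcomb]
            ring
          · rw [hv0]; exact hRdeg
          · rw [hv0]; exact hP1

end PingPong

/-- Let `k` be a field of characteristic zero and `c, d ≥ 2`. The automorphisms
`u : x ↦ x + s·y^c, y ↦ y` and `v : x ↦ x, y ↦ y + t·x^d` of `k[x,y]`, for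
nonzero `s, t ∈ k`, generate a free subgroup of rank 2 of the automorphism group. -/
theorem stmt_8 {k : Type*} [Field k] [CharZero k] (c d : ℕ) (hc : 2 ≤ c) (hd : 2 ≤ d)
    (s t : k) (hs : s ≠ 0) (ht : t ≠ 0)
    (u v : MvPolynomial (Fin 2) k ≃ₐ[k] MvPolynomial (Fin 2) k)
    (hux : u (X 0) = X 0 + C s * (X 1) ^ c) (huy : u (X 1) = X 1)
    (hvx : v (X 0) = X 0) (hvy : v (X 1) = X 1 + C t * (X 0) ^ d) :
    Function.Injective (FreeGroup.lift (fun i : Fin 2 => if i = 0 then u else v)) := by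
  refine (injective_iff_map_eq_one _).mpr ?_
  intro w hw
  by_contra hw1
  have hnil : w.toWord ≠ [] := fun h => hw1 (FreeGroup.toWord_eq_nil_iff.1 h)
  have hred : ∀ (l₁ l₂ : List (Fin 2 × Bool)) (i : Fin 2) (b : Bool),
      w.toWord ≠ l₁ ++ (i, b) :: (i, !b) :: l₂ := by
    intro l₁ l₂ i b h
    have h2 := FreeGroup.reduce_toWord w
    rw [h] at h2
    exact FreeGroup.reduce.not h2
  have hW : Wrd u v w.toWord = 1 := by
    calc Wrd u v w.toWord
        = FreeGroup.lift (fun i : Fin 2 => if i = 0 then u else v) (FreeGroup.mk w.toWord) := by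
          rw [FreeGroup.lift_mk]; rfl
      _ = 1 := by rw [FreeGroup.mk_toWord]; exact hw
  rcases pingpong_main u v hc hd hs ht hux huy hvx hvy w.toWord hred hnil with
    ⟨b, m, R, hlast, hm, hbt, hbf, hP, hRdeg, hQ1⟩ |
    ⟨b, m, R, hlast, hm, hbt, hbf, hQ, hRdeg, hP1⟩
  · have hdeg : (Wrd u v w.toWord (X 0)).totalDegree
        = c * (Wrd u v w.toWord (X 1)).totalDegree := by
      rw [hP]
      exact deg_shape (mul_ne_zero (Int.cast_ne_zero.2 hm) hs) hQ1 hRdeg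
    rw [hW] at hdeg hQ1
    simp only [AlgEquiv.one_apply, totalDegree_X] at hdeg hQ1
    omega
  · have hdeg : (Wrd u v w.toWord (X 1)).totalDegree
        = d * (Wrd u v w.toWord (X 0)).totalDegree := by
      rw [hQ]
      exact deg_shape (mul_ne_zero (Int.cast_ne_zero.2 hm) ht) hP1 hRdeg
    rw [hW] at hdeg hP1
    simp only [AlgEquiv.one_apply, totalDegree_X] at hdeg hP1
    omega
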